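/- If μ is absolutely continuous with respect to Lebesgue measure, μ_n ⇀ μ weakly, and there exists a stagnating sequence of transportation maps T_n (i.e. (T_n)_# μ = μ_n and ∫|x − T_n(x)|^q dμ → 0) with ∫ |f(x) − f_n(T_n(x))|^q dμ(x) → 0, then (μ_n, f_n) → (μ, f) in the TL^q metric. -/

import Mathlib

open MeasureTheory Filter Topology

/-- The set of couplings (transportation plans) between two measures on `ℝ/Lℤ`. -/
def couplings (L : ℝ) (μ ν : Measure (AddCircle L)) :
    Set (Measure (AddCircle L × AddCircle L)) :=
  {π | IsProbabilityMeasure π ∧ π.map Prod.fst = μ ∧ π.map Prod.snd = ν}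

/-- The `TL^q` transportation distance between `(μ,f)` and `(ν,g)`. -/
noncomputable def dTL (L q : ℝ) (μ ν : Measure (AddCircle L))
    (f g : AddCircle L → ℝ) : ℝ :=
  sInf {r : ℝ | ∃ π ∈ couplings L μ ν,
    r = (∫ z : AddCircle L × AddCircle L,
      (‖z.1 - z.2‖ ^ q + |f z.1 - g z.2| ^ q) ∂π) ^ (1 / q)}

/-- Weak convergence of measures on the circle. -/
def WeakConv (L : ℝ) (μn : ℕ → Measure (AddCircle L)) (μ : Measure (AddCircle L)) : Prop :=
  ∀ φ : AddCircle L → ℝ, Continuous φ →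
    Tendsto (fun n => ∫ x, φ x ∂(μn n)) atTop (𝓝 (∫ x, φ x ∂μ))

/-- If `μ ≪ Leb`, `μ_n ⇀ μ`, and there is a stagnating sequence of transportation
maps `T_n` with `∫ |f - f_n ∘ T_n|^q dμ → 0`, then `(μ_n,f_n) → (μ,f)` in `TL^q`. -/
theorem stmt_3 (L q : ℝ) [Fact (0 < L)] (hq : 1 ≤ q)
    (μ : Measure (AddCircle L)) (μn : ℕ → Measure (AddCircle L))
    (f : AddCircle L → ℝ) (fn : ℕ → AddCircle L → ℝ)
    (hμ : IsProbabilityMeasure μ) (hμn : ∀ n, IsProbabilityMeasure (μn n))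
    (hf : MemLp f (ENNReal.ofReal q) μ)
    (hfn : ∀ n, MemLp (fn n) (ENNReal.ofReal q) (μn n))
    (hac : μ ≪ MeasureTheory.volume)
    (hweak : WeakConv L μn μ)
    (T : ℕ → AddCircle L → AddCircle L)
    (hTmeas : ∀ n, Measurable (T n))
    (hpush : ∀ n, μ.map (T n) = μn n)
    (hstag : Tendsto (fun n => ∫ x, ‖x - T n x‖ ^ q ∂μ) atTop (𝓝 0))
    (hconv : Tendsto (fun n => ∫ x, |f x - fn n (T n x)| ^ q ∂μ) atTop (𝓝 0)) :
    Tendsto (fun n => dTL L q (μn n) μ (fn n) f) atTop (𝓝 0) := by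
  have hq0 : (0:ℝ) < q := lt_of_lt_of_le one_pos hq
  -- all elements of the defining set of dTL are nonneg
  have hnonneg : ∀ n, ∀ r ∈ {r : ℝ | ∃ π ∈ couplings L (μn n) μ,
      r = (∫ z : AddCircle L × AddCircle L,
        (‖z.1 - z.2‖ ^ q + |fn n z.1 - f z.2| ^ q) ∂π) ^ (1 / q)}, 0 ≤ r := by
    rintro n r ⟨π, -, rfl⟩
    refine Real.rpow_nonneg (integral_nonneg fun z => ?_) _
    exact add_nonneg (Real.rpow_nonneg (norm_nonneg _) _) (Real.rpow_nonneg (abs_nonneg _) _)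
  -- the coupling
  have hmeasn : ∀ n, Measurable (fun x => (T n x, x)) := fun n =>
    (hTmeas n).prodMk measurable_id
  set π : ℕ → Measure (AddCircle L × AddCircle L) :=
    fun n => μ.map (fun x => (T n x, x)) with hπdef
  have hπprob : ∀ n, IsProbabilityMeasure (π n) := fun n =>
    Measure.isProbabilityMeasure_map (hmeasn n).aemeasurable
  have hfst : ∀ n, (π n).map Prod.fst = μn n := by
    intro n
    rw [hπdef, Measure.map_map measurable_fst (hmeasn n)]
    exact hpush n
  have hsnd : ∀ n, (π n).map Prod.snd = μ := by
    intro n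
    rw [hπdef, Measure.map_map measurable_snd (hmeasn n),
      show (Prod.snd ∘ fun x => (T n x, x)) = id from rfl, Measure.map_id]
  -- measurable representatives
  obtain ⟨f', hf'meas, hff'⟩ := hf.1
  have hfn' : ∀ n, ∃ g, StronglyMeasurable g ∧ fn n =ᵐ[μn n] g := fun n => (hfn n).1
  choose fn' hfn'meas hfnfn' using hfn'
  -- key integral identity
  have key : ∀ n, (∫ z : AddCircle L × AddCircle L,
      (‖z.1 - z.2‖ ^ q + |fn n z.1 - f z.2| ^ q) ∂(π n))
      = (∫ x, ‖x - T n x‖ ^ q ∂μ) + ∫ x, |f x - fn n (T n x)| ^ q ∂μ := by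
    intro n
    have hae1 : (fun z : AddCircle L × AddCircle L => f z.2) =ᵐ[π n]
        (fun z => f' z.2) := by
      have := ae_eq_comp (measurable_snd.aemeasurable (μ := π n)) ((hsnd n) ▸ hff')
      exact this
    have hae2 : (fun z : AddCircle L × AddCircle L => fn n z.1) =ᵐ[π n]
        (fun z => fn' n z.1) := by
      have := ae_eq_comp (measurable_fst.aemeasurable (μ := π n)) ((hfst n) ▸ hfnfn' n)
      exact this
    have hae3 : (fun x => f' x) =ᵐ[μ] f := hff'.symm
    have hae4 : (fun x => fn' n (T n x)) =ᵐ[μ] (fun x => fn n (T n x)) :=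
      (ae_eq_comp (hTmeas n).aemeasurable ((hpush n) ▸ (hfnfn' n))).symm
    have hF'meas : StronglyMeasurable (fun z : AddCircle L × AddCircle L =>
        ‖z.1 - z.2‖ ^ q + |fn' n z.1 - f' z.2| ^ q) := by
      apply StronglyMeasurable.add
      · exact ((Real.continuous_rpow_const hq0.le).measurable.comp
          (measurable_fst.sub measurable_snd).norm).stronglyMeasurable
      · exact ((Real.continuous_rpow_const hq0.le).measurable.comp
          (((hfn'meas n).measurable.comp measurable_fst).sub
            (hf'meas.measurable.comp measurable_snd)).abs).stronglyMeasurable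
    calc (∫ z : AddCircle L × AddCircle L,
        (‖z.1 - z.2‖ ^ q + |fn n z.1 - f z.2| ^ q) ∂(π n))
        = ∫ z : AddCircle L × AddCircle L,
          (‖z.1 - z.2‖ ^ q + |fn' n z.1 - f' z.2| ^ q) ∂(π n) := by
          refine integral_congr_ae ?_
          filter_upwards [hae1, hae2] with z h1 h2
          rw [h1, h2]
      _ = ∫ x, (‖T n x - x‖ ^ q + |fn' n (T n x) - f' x| ^ q) ∂μ := by
          rw [hπdef]
          exact integral_map (hmeasn n).aemeasurable hF'meas.aestronglyMeasurable
      _ = ∫ x, (‖x - T n x‖ ^ q + |f x - fn n (T n x)| ^ q) ∂μ := by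
          refine integral_congr_ae ?_
          filter_upwards [hae3, hae4] with x h3 h4
          rw [h3, h4, norm_sub_rev, abs_sub_comm]
      _ = (∫ x, ‖x - T n x‖ ^ q ∂μ) + ∫ x, |f x - fn n (T n x)| ^ q ∂μ := by
          have hg1 : Integrable (fun x => ‖x - T n x‖ ^ q) μ := by
            refine Integrable.mono' (integrable_const ((|L| / 2) ^ q))
              ((Real.continuous_rpow_const hq0.le).measurable.comp
                (measurable_id.sub (hTmeas n)).norm).aestronglyMeasurable
              (ae_of_all _ fun x => ?_)
            rw [Real.norm_eq_abs, abs_of_nonneg (Real.rpow_nonneg (norm_nonneg _) _)]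
            exact Real.rpow_le_rpow (norm_nonneg _)
              (AddCircle.norm_le_half_period L (Fact.out (p := 0 < L)).ne') hq0.le
          have hg2 : Integrable (fun x => |f x - fn n (T n x)| ^ q) μ := by
            have hmem : MemLp (fun x => fn n (T n x)) (ENNReal.ofReal q) μ := by
              have := (hfn n)
              rw [← hpush n] at this
              exact (memLp_map_measure_iff this.1 (hTmeas n).aemeasurable).1 this
            have := (hf.sub hmem).integrable_norm_rpow
              (by simpa [ENNReal.ofReal_eq_zero] using hq0.not_ge)
              ENNReal.ofReal_ne_top
            simpa [ENNReal.toReal_ofReal hq0.le, Real.norm_eq_abs] using this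
          exact integral_add hg1 hg2
  -- squeeze
  have hub : ∀ n, dTL L q (μn n) μ (fn n) f ≤
      ((∫ x, ‖x - T n x‖ ^ q ∂μ) + ∫ x, |f x - fn n (T n x)| ^ q ∂μ) ^ (1 / q) := by
    intro n
    refine csInf_le ⟨0, fun r hr => hnonneg n r hr⟩ ?_
    exact ⟨π n, ⟨hπprob n, hfst n, hsnd n⟩, by rw [key n]⟩
  have hlb : ∀ n, 0 ≤ dTL L q (μn n) μ (fn n) f := fun n =>
    Real.sInf_nonneg (hnonneg n)
  have hlim : Tendsto (fun n =>
      ((∫ x, ‖x - T n x‖ ^ q ∂μ) + ∫ x, |f x - fn n (T n x)| ^ q ∂μ) ^ (1 / q))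
      atTop (𝓝 0) := by
    have := (hstag.add hconv).rpow_const (p := 1 / q) (Or.inr (by positivity))
    simpa [one_div, Real.zero_rpow (by positivity : q⁻¹ ≠ 0)] using this
  exact squeeze_zero hlb hub hlim
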